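/- Let S be a semigroup that is the disjoint union of free monogenic subsemigroups ⟨a⟩, ⟨b⟩, ⟨c⟩, with ab = ba = a^i (for some i ≥ 1). If ac ∈ ⟨c⟩ then bc ∈ ⟨c⟩, and if ca ∈ ⟨c⟩ then cb ∈ ⟨c⟩. -/
import Mathlib


/-- `pw a n` is `a ^ n` for `n ≥ 1` (with junk value `a` at `n = 0`),
defined in any magma. -/
def pw {S : Type*} [Mul S] (a : S) : ℕ → S
  | 0 => a
  | 1 => a
  | n + 2 => pw a (n + 1) * a

/-- The monogenic subsemigroup `⟨a⟩ = {a^n : n ≥ 1}`. -/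
def genSet {S : Type*} [Mul S] (a : S) : Set S := {x | ∃ n, 1 ≤ n ∧ pw a n = x}

/-- `a` has infinite order: its positive powers are pairwise distinct,
i.e. `⟨a⟩` is free monogenic. -/
def InfOrder {S : Type*} [Mul S] (a : S) : Prop :=
  ∀ m n : ℕ, 1 ≤ m → 1 ≤ n → pw a m = pw a n → m = n

lemma pw_one {S : Type*} [Mul S] (a : S) : pw a 1 = a := rfl

lemma pw_succ {S : Type*} [Mul S] (a : S) (n : ℕ) (hn : 1 ≤ n) :
    pw a (n + 1) = pw a n * a := by
  cases n with
  | zero => omega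
  | succ m => rfl

lemma pw_add {S : Type*} [Semigroup S] (a : S) (m n : ℕ) (hm : 1 ≤ m) (hn : 1 ≤ n) :
    pw a (m + n) = pw a m * pw a n := by
  induction n with
  | zero => omega
  | succ k ih =>
    cases Nat.eq_zero_or_pos k with
    | inl h => subst h; exact pw_succ a m hm
    | inr hk =>
      rw [← Nat.add_assoc, pw_succ a (m + k) (by omega), ih hk,
        pw_succ a k hk, mul_assoc]

lemma pw_left {S : Type*} [Semigroup S] (a : S) (n : ℕ) (hn : 1 ≤ n) :
    pw a (n + 1) = a * pw a n := by
  have := pw_add a 1 n le_rfl hn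
  rwa [Nat.add_comm 1 n] at this

lemma pw_mem {S : Type*} [Mul S] (a : S) (n : ℕ) (hn : 1 ≤ n) :
    pw a n ∈ genSet a := ⟨n, hn, rfl⟩

section Main
variable {S : Type*} [Semigroup S]

/-- If `a*c ∈ ⟨c⟩` then `a * c^m ∈ ⟨c⟩`. -/
lemma mul_pw_mem (a c : S) (k : ℕ) (hk : 1 ≤ k) (hkc : a * c = pw c k) :
    ∀ m, 1 ≤ m → a * pw c m ∈ genSet c := by
  intro m hm
  induction m with
  | zero => omega
  | succ j ih =>
    cases Nat.eq_zero_or_pos j with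
    | inl h => subst h; exact ⟨k, hk, hkc.symm⟩
    | inr hj =>
      rw [pw_left c j hj, ← mul_assoc, hkc, ← pw_add c k j hk hj]
      exact pw_mem c (k + j) (by omega)

/-- If `a*c ∈ ⟨c⟩` then `a^n * c ∈ ⟨c⟩`. -/
lemma pw_mul_mem (a c : S) (k : ℕ) (hk : 1 ≤ k) (hkc : a * c = pw c k) :
    ∀ n, 1 ≤ n → pw a n * c ∈ genSet c := by
  intro n hn
  induction n with
  | zero => omega
  | succ j ih =>
    cases Nat.eq_zero_or_pos j with
    | inl h => subst h; exact ⟨k, hk, hkc.symm⟩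
    | inr hj =>
      obtain ⟨m, hm, hme⟩ := ih hj
      rw [pw_left a j hj, mul_assoc, ← hme]
      exact mul_pw_mem a c k hk hkc m hm

/-- symmetric: if `c*a ∈ ⟨c⟩` then `c^m * a ∈ ⟨c⟩`. -/
lemma pw_mul_mem' (a c : S) (k : ℕ) (hk : 1 ≤ k) (hkc : c * a = pw c k) :
    ∀ m, 1 ≤ m → pw c m * a ∈ genSet c := by
  intro m hm
  induction m with
  | zero => omega
  | succ j ih =>
    cases Nat.eq_zero_or_pos j with
    | inl h => subst h; exact ⟨k, hk, hkc.symm⟩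
    | inr hj =>
      rw [pw_succ c j hj, mul_assoc, hkc, ← pw_add c j k hj hk]
      exact pw_mem c (j + k) (by omega)

/-- symmetric: if `c*a ∈ ⟨c⟩` then `c * a^n ∈ ⟨c⟩`. -/
lemma mul_pw_mem' (a c : S) (k : ℕ) (hk : 1 ≤ k) (hkc : c * a = pw c k) :
    ∀ n, 1 ≤ n → c * pw a n ∈ genSet c := by
  intro n hn
  induction n with
  | zero => omega
  | succ j ih =>
    cases Nat.eq_zero_or_pos j with
    | inl h => subst h; exact ⟨k, hk, hkc.symm⟩
    | inr hj =>
      obtain ⟨m, hm, hme⟩ := ih hj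
      rw [pw_succ a j hj, ← mul_assoc, ← hme]
      exact pw_mul_mem' a c k hk hkc m hm

/-- `a^j * b ∈ ⟨a⟩` given `a*b = a^i`. -/
lemma pw_a_mul_b (a b : S) (i : ℕ) (hi : 1 ≤ i) (h1 : a * b = pw a i) :
    ∀ j, 1 ≤ j → pw a j * b ∈ genSet a := by
  intro j hj
  induction j with
  | zero => omega
  | succ m ih =>
    cases Nat.eq_zero_or_pos m with
    | inl h => subst h; exact ⟨i, hi, h1.symm⟩
    | inr hm =>
      obtain ⟨t, ht, hte⟩ := ih hm
      rw [pw_left a m hm, mul_assoc, ← hte, ← pw_left a t ht]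
      exact pw_mem a (t + 1) (by omega)

/-- `a * b^m ∈ ⟨a⟩` given `a*b = a^i`. -/
lemma a_mul_pw_b (a b : S) (i : ℕ) (hi : 1 ≤ i) (h1 : a * b = pw a i) :
    ∀ m, 1 ≤ m → a * pw b m ∈ genSet a := by
  intro m hm
  induction m with
  | zero => omega
  | succ j ih =>
    cases Nat.eq_zero_or_pos j with
    | inl h => subst h; exact ⟨i, hi, h1.symm⟩
    | inr hj =>
      obtain ⟨t, ht, hte⟩ := ih hj
      rw [pw_succ b j hj, ← mul_assoc, ← hte]
      exact pw_a_mul_b a b i hi h1 t ht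

/-- `b * a^j ∈ ⟨a⟩` given `b*a = a^i`. -/
lemma b_mul_pw_a (a b : S) (i : ℕ) (hi : 1 ≤ i) (h2 : b * a = pw a i) :
    ∀ j, 1 ≤ j → b * pw a j ∈ genSet a := by
  intro j hj
  induction j with
  | zero => omega
  | succ m ih =>
    cases Nat.eq_zero_or_pos m with
    | inl h => subst h; exact ⟨i, hi, h2.symm⟩
    | inr hm =>
      obtain ⟨t, ht, hte⟩ := ih hm
      rw [pw_succ a m hm, ← mul_assoc, ← hte, ← pw_succ a t ht]
      exact pw_mem a (t + 1) (by omega)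

/-- `b^m * a ∈ ⟨a⟩` given `b*a = a^i`. -/
lemma pw_b_mul_a (a b : S) (i : ℕ) (hi : 1 ≤ i) (h2 : b * a = pw a i) :
    ∀ m, 1 ≤ m → pw b m * a ∈ genSet a := by
  intro m hm
  induction m with
  | zero => omega
  | succ j ih =>
    cases Nat.eq_zero_or_pos j with
    | inl h => subst h; exact ⟨i, hi, h2.symm⟩
    | inr hj =>
      obtain ⟨t, ht, hte⟩ := ih hj
      rw [pw_left b j hj, mul_assoc, ← hte]
      exact b_mul_pw_a a b i hi h2 t ht

end Main

theorem stmt_11 {S : Type*} [Semigroup S] (a b c : S)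
    (ha : InfOrder a) (hb : InfOrder b) (hc : InfOrder c)
    (hab : genSet a ∩ genSet b = ∅) (hac : genSet a ∩ genSet c = ∅)
    (hbc : genSet b ∩ genSet c = ∅)
    (hcover : genSet a ∪ genSet b ∪ genSet c = Set.univ)
    (i : ℕ) (hi : 1 ≤ i) (h1 : a * b = pw a i) (h2 : b * a = pw a i) :
    (a * c ∈ genSet c → b * c ∈ genSet c) ∧ (c * a ∈ genSet c → c * b ∈ genSet c) := by
  constructor
  · rintro ⟨k, hk, hkc⟩
    -- a*(b*c) = (a*b)*c = a^i * c ∈ ⟨c⟩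
    have habc : a * (b * c) ∈ genSet c := by
      rw [← mul_assoc, h1]
      exact pw_mul_mem a c k hk hkc.symm i hi
    have hcov : b * c ∈ genSet a ∪ genSet b ∪ genSet c := by
      rw [hcover]; trivial
    rcases hcov with (⟨m, hm, hme⟩ | ⟨m, hm, hme⟩) | h
    · exfalso
      have h1' : a * (b * c) ∈ genSet a := by
        rw [← hme, ← pw_left a m hm]
        exact pw_mem a (m + 1) (by omega)
      have : a * (b * c) ∈ genSet a ∩ genSet c := ⟨h1', habc⟩
      rw [hac] at this; exact this
    · exfalso
      have h1' : a * (b * c) ∈ genSet a := by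
        rw [← hme]
        exact a_mul_pw_b a b i hi h1 m hm
      have : a * (b * c) ∈ genSet a ∩ genSet c := ⟨h1', habc⟩
      rw [hac] at this; exact this
    · exact h
  · rintro ⟨k, hk, hkc⟩
    have hcba : c * b * a ∈ genSet c := by
      rw [mul_assoc, h2]
      exact mul_pw_mem' a c k hk hkc.symm i hi
    have hcov : c * b ∈ genSet a ∪ genSet b ∪ genSet c := by
      rw [hcover]; trivial
    rcases hcov with (⟨m, hm, hme⟩ | ⟨m, hm, hme⟩) | h
    · exfalso
      have h1' : c * b * a ∈ genSet a := by
        rw [← hme, ← pw_succ a m hm]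
        exact pw_mem a (m + 1) (by omega)
      have : c * b * a ∈ genSet a ∩ genSet c := ⟨h1', hcba⟩
      rw [hac] at this; exact this
    · exfalso
      have h1' : c * b * a ∈ genSet a := by
        rw [← hme]
        exact pw_b_mul_a a b i hi h2 m hm
      have : c * b * a ∈ genSet a ∩ genSet c := ⟨h1', hcba⟩
      rw [hac] at this; exact this
    · exact h
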